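/- If a subset Y of a topological space X is countably paracompact in X, then every subset of Y that is closed in the subspace Y is also countably paracompact in X. -/
import Mathlib


universe u

open Cardinal Set Topology

/-- A subset `Y` of a topological space `X` is countably paracompact in `X` if every countable
cover of `Y` by open subsets of `X` admits a locally finite (in `X`) refinement by open subsets
of `X` covering `Y`. -/
def CountablyParacompactIn (X : Type u) [TopologicalSpace X] (Y : Set X) : Prop :=
  ∀ U : Set (Set X), U.Countable → (∀ u ∈ U, IsOpen u) → Y ⊆ ⋃₀ U →
    ∃ V : Set (Set X), (∀ v ∈ V, IsOpen v) ∧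
      LocallyFinite (fun v : V => (v : Set X)) ∧
      Y ⊆ ⋃₀ V ∧ ∀ v ∈ V, ∃ u ∈ U, v ⊆ u

/-- If `Y ⊆ X` is countably paracompact in `X`, then every subset of `Y` that is closed in the
subspace `Y` is countably paracompact in `X`. -/
theorem countablyParacompactIn_of_isClosed_subset {X : Type u} [TopologicalSpace X] {Y : Set X}
    (hY : CountablyParacompactIn X Y) (Z : Set X) (hZY : Z ⊆ Y)
    (hZ : IsClosed ((Subtype.val ⁻¹' Z : Set Y))) : CountablyParacompactIn X Z := by
  intro U hUc hUo hUcov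
  obtain ⟨t, ht, htZ⟩ := isClosed_induced_iff.mp hZ
  -- O = tᶜ is open, Y \ Z ⊆ O, O ∩ Z = ∅
  have hYt : Y ∩ t = Z := by
    ext x
    constructor
    · rintro ⟨hxY, hxt⟩
      have : (⟨x, hxY⟩ : Y) ∈ (Subtype.val ⁻¹' t : Set Y) := hxt
      rw [htZ] at this; exact this
    · intro hxZ
      refine ⟨hZY hxZ, ?_⟩
      have : (⟨x, hZY hxZ⟩ : Y) ∈ (Subtype.val ⁻¹' Z : Set Y) := hxZ
      rw [← htZ] at this; exact this
  obtain ⟨V, hVo, hVlf, hVcov, hVref⟩ := hY (insert tᶜ U) (hUc.insert _)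
    (by rintro u hu; rcases hu with rfl | hu; exacts [ht.isOpen_compl, hUo u hu])
    (by
      intro y hy
      by_cases hyZ : y ∈ Z
      · obtain ⟨u, hu, hyu⟩ := hUcov hyZ
        exact ⟨u, Or.inr hu, hyu⟩
      · refine ⟨tᶜ, Or.inl rfl, fun hyt => hyZ ?_⟩
        rw [← hYt]; exact ⟨hy, hyt⟩)
  refine ⟨{v ∈ V | ∃ u ∈ U, v ⊆ u}, fun v hv => hVo v hv.1, ?_, ?_, fun v hv => hv.2⟩
  · exact hVlf.comp_injective (g := fun v : {v ∈ V | ∃ u ∈ U, v ⊆ u} => (⟨v.1, v.2.1⟩ : V))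
      (fun a b hab => by simpa [Subtype.ext_iff] using hab)
  · intro z hz
    obtain ⟨v, hv, hzv⟩ := hVcov (hZY hz)
    obtain ⟨u, hu, hvu⟩ := hVref v hv
    rcases hu with rfl | hu
    · exact absurd (hYt ▸ hz : z ∈ Y ∩ t).2 (hvu hzv)
    · exact ⟨v, ⟨hv, u, hu, hvu⟩, hzv⟩
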